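/- For every integer p ≥ 2, the sandpile group K(Cone(T_p)) of the cone over the left comb tree T_p, i.e. the cokernel of the reduced Laplacian of Cone(T_p), is a cyclic abelian group (it can be generated by a single element), while the tree T_p has exactly p leaves. -/

import Mathlib

set_option linter.unreachableTactic false
set_option linter.unusedTactic false


/-- The cone over a graph: add a new vertex `none` adjacent to everything. -/
def coneGraph {V : Type*} (G : SimpleGraph V) : SimpleGraph (Option V) :=
  SimpleGraph.fromRel (fun u v =>
    u = none ∨ ∃ a b, u = some a ∧ v = some b ∧ G.Adj a b)


open scoped Classical in
/-- The reduced Laplacian of the cone over `G`, with respect to the cone vertex: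
the Laplacian matrix `D - A` of `coneGraph G` with the row and column of the
cone vertex deleted. -/
noncomputable def reducedLap {V : Type*} [Fintype V] (G : SimpleGraph V) :
    Matrix V V ℤ :=
  ((coneGraph G).lapMatrix ℤ).submatrix some some


/-- The left comb tree `T_p` on `2p-1` vertices: `Sum.inl i` is the spine
vertex `π_{i+1}` (for `i < p`) and `Sum.inr j` is the leaf `ℓ_{j+1}`
(for `j < p-1`), with edges `π_i – π_{i+1}` and `π_{j+1} – ℓ_j`. -/
def combTree (p : ℕ) : SimpleGraph (Fin p ⊕ Fin (p - 1)) :=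
  SimpleGraph.fromRel (fun u v =>
    match u, v with
    | Sum.inl i, Sum.inl j => (i : ℕ) + 1 = (j : ℕ)
    | Sum.inl i, Sum.inr j => (i : ℕ) = (j : ℕ) + 1
    | _, _ => False)


lemma combTree_adj_ll {p : ℕ} (i j : Fin p) :
    (combTree p).Adj (.inl i) (.inl j) ↔ ((i:ℕ)+1 = j ∨ (j:ℕ)+1 = i) := by
  unfold combTree
  rw [SimpleGraph.fromRel_adj]
  simp only [ne_eq, Sum.inl.injEq]
  constructor
  · rintro ⟨h, h2⟩; exact h2
  · intro h; exact ⟨fun e => by subst e; omega, h⟩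

lemma combTree_adj_lr {p : ℕ} (i : Fin p) (j : Fin (p-1)) :
    (combTree p).Adj (.inl i) (.inr j) ↔ ((i:ℕ) = (j:ℕ)+1) := by
  unfold combTree
  rw [SimpleGraph.fromRel_adj]
  simp

lemma combTree_adj_rl {p : ℕ} (i : Fin p) (j : Fin (p-1)) :
    (combTree p).Adj (.inr j) (.inl i) ↔ ((i:ℕ) = (j:ℕ)+1) := by
  unfold combTree
  rw [SimpleGraph.fromRel_adj]
  simp

lemma combTree_adj_rr {p : ℕ} (j k : Fin (p-1)) :
    ¬ (combTree p).Adj (.inr j) (.inr k) := by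
  unfold combTree
  rw [SimpleGraph.fromRel_adj]
  simp

lemma coneGraph_adj_some_some {V : Type*} (G : SimpleGraph V) (a b : V) :
    (coneGraph G).Adj (some a) (some b) ↔ G.Adj a b := by
  unfold coneGraph
  rw [SimpleGraph.fromRel_adj]
  constructor
  · rintro ⟨h, (⟨h2 | ⟨x,y,hx,hy,hadj⟩⟩ | ⟨h2 | ⟨x,y,hx,hy,hadj⟩⟩)⟩
    · exact absurd h2 (by simp)
    · simp only [Option.some.injEq] at hx hy; subst hx; subst hy; exact hadj
    · exact absurd h2 (by simp)
    · simp only [Option.some.injEq] at hx hy; subst hx; subst hy; exact hadj.symm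
  · intro h
    exact ⟨by simp [G.ne_of_adj h], Or.inl (Or.inr ⟨a, b, rfl, rfl, h⟩)⟩

lemma coneGraph_adj_some_none {V : Type*} (G : SimpleGraph V) (a : V) :
    (coneGraph G).Adj (some a) none := by
  unfold coneGraph
  rw [SimpleGraph.fromRel_adj]
  exact ⟨by simp, Or.inr (Or.inl rfl)⟩

open Finset in
open scoped Classical in
lemma coneGraph_neighborFinset {V : Type*} [Fintype V] (G : SimpleGraph V) (a : V) :
    (coneGraph G).neighborFinset (some a) =
      insert none ((univ.filter (fun w => G.Adj a w)).image some) := by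
  ext w
  cases w with
  | none => simp [SimpleGraph.mem_neighborFinset, coneGraph_adj_some_none]
  | some b => simp [SimpleGraph.mem_neighborFinset, coneGraph_adj_some_some]

open Finset in
open scoped Classical in
lemma coneGraph_degree {V : Type*} [Fintype V] (G : SimpleGraph V) (a : V) :
    (coneGraph G).degree (some a) = 1 + Nat.card {w // G.Adj a w} := by
  rw [SimpleGraph.degree, coneGraph_neighborFinset]
  rw [Finset.card_insert_of_notMem (by simp)]
  rw [Finset.card_image_of_injective _ (Option.some_injective V)]
  rw [Nat.card_eq_fintype_card, Fintype.card_subtype]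
  omega

open scoped Classical in
lemma reducedLap_apply {V : Type*} [Fintype V] (G : SimpleGraph V) (u v : V) :
    reducedLap G u v =
      (if u = v then (1 + Nat.card {w // G.Adj u w} : ℤ) else 0)
      - (if G.Adj u v then 1 else 0) := by
  rw [reducedLap, Matrix.submatrix_apply, SimpleGraph.lapMatrix, Matrix.sub_apply,
    SimpleGraph.degMatrix, Matrix.diagonal_apply, SimpleGraph.adjMatrix_apply]
  congr 1
  · by_cases h : u = v
    · subst h; rw [if_pos rfl, if_pos rfl, coneGraph_degree]; push_cast; ring
    · rw [if_neg (by simpa using h), if_neg h]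
  · by_cases h : G.Adj u v
    · rw [if_pos ((coneGraph_adj_some_some G u v).mpr h), if_pos h]
    · rw [if_neg (fun hc => h ((coneGraph_adj_some_some G u v).mp hc)), if_neg h]

open Finset in
open scoped Classical in
lemma ncard_leaf {p : ℕ} (hp : 2 ≤ p) (j : Fin (p-1)) :
    Nat.card {w // (combTree p).Adj (.inr j) w} = 1 := by
  rw [Nat.card_eq_fintype_card, Fintype.card_subtype]
  have hj : (j:ℕ) + 1 < p := by have := j.isLt; omega
  have : (univ.filter fun w => (combTree p).Adj (.inr j) w)
      = {Sum.inl ⟨(j:ℕ)+1, hj⟩} := by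
    ext w
    rcases w with ⟨k, hk⟩ | ⟨k, hk⟩ <;>
      simp [combTree_adj_rl, combTree_adj_rr, Fin.ext_iff] <;> omega
  rw [this, Finset.card_singleton]

open Finset in
open scoped Classical in
lemma ncard_spine {p : ℕ} (hp : 2 ≤ p) (i : Fin p) :
    Nat.card {w // (combTree p).Adj (.inl i) w} =
      if (i:ℕ) = 0 then 1 else if (i:ℕ) = p-1 then 2 else 3 := by
  rw [Nat.card_eq_fintype_card, Fintype.card_subtype]
  by_cases h0 : (i:ℕ) = 0
  · rw [if_pos h0]
    have : (univ.filter fun w => (combTree p).Adj (.inl i) w)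
        = {Sum.inl ⟨1, by omega⟩} := by
      ext w
      rcases w with ⟨k, hk⟩ | ⟨k, hk⟩ <;>
        simp [combTree_adj_ll, combTree_adj_lr, Fin.ext_iff] <;> omega
    rw [this, Finset.card_singleton]
  · rw [if_neg h0]
    by_cases hl : (i:ℕ) = p - 1
    · rw [if_pos hl]
      have : (univ.filter fun w => (combTree p).Adj (.inl i) w)
          = {Sum.inl ⟨p-2, by omega⟩, Sum.inr ⟨p-2, by omega⟩} := by
        ext w
        rcases w with ⟨k, hk⟩ | ⟨k, hk⟩ <;>
          simp [combTree_adj_ll, combTree_adj_lr, Fin.ext_iff] <;> omega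
      rw [this]
      rw [Finset.card_insert_of_notMem (by simp), Finset.card_singleton]
    · rw [if_neg hl]
      have hi1 : (i:ℕ) - 1 < p := by omega
      have hi2 : (i:ℕ) + 1 < p := by have := i.isLt; omega
      have hi3 : (i:ℕ) - 1 < p - 1 := by have := i.isLt; omega
      have : (univ.filter fun w => (combTree p).Adj (.inl i) w)
          = {Sum.inl ⟨(i:ℕ)-1, hi1⟩, Sum.inl ⟨(i:ℕ)+1, hi2⟩, Sum.inr ⟨(i:ℕ)-1, hi3⟩} := by
        ext w
        rcases w with ⟨k, hk⟩ | ⟨k, hk⟩ <;>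
          simp [combTree_adj_ll, combTree_adj_lr, Fin.ext_iff] <;> omega
      rw [this]
      rw [Finset.card_insert_of_notMem (by simp [Fin.ext_iff]; try omega),
        Finset.card_insert_of_notMem (by simp), Finset.card_singleton]

open Finset in
open scoped Classical in
lemma leaf_count {p : ℕ} (hp : 2 ≤ p) :
    Nat.card {v : Fin p ⊕ Fin (p - 1) //
      Nat.card {w // (combTree p).Adj v w} = 1} = p := by
  rw [Nat.card_eq_fintype_card, Fintype.card_subtype]
  have : (univ.filter fun v : Fin p ⊕ Fin (p-1) =>
        Nat.card {w // (combTree p).Adj v w} = 1)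
      = insert (Sum.inl ⟨0, by omega⟩) (univ.image Sum.inr) := by
    ext v
    rcases v with i | j
    · simp only [Finset.mem_filter, Finset.mem_univ, true_and, Finset.mem_insert,
        Finset.mem_image, Sum.inl.injEq, reduceCtorEq, exists_false, or_false,
        ncard_spine hp i]
      constructor
      · intro h
        split_ifs at h with h1 h2 <;> first | (exact Fin.ext h1) | omega
      · intro h; subst h; simp
    · have h := ncard_leaf hp j
      rw [Nat.card_eq_fintype_card] at h
      simp [h]
  rw [this, Finset.card_insert_of_notMem (by simp),
    Finset.card_image_of_injective _ Sum.inr_injective, Finset.card_univ,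
    Fintype.card_fin]
  omega

private def entZ (p : ℕ) : (Fin p ⊕ Fin (p-1)) → (Fin p ⊕ Fin (p-1)) → ℤ
  | Sum.inl i, Sum.inl j =>
      if (i:ℕ) = j then (if (i:ℕ) = 0 then 2 else if (i:ℕ) = p-1 then 3 else 4)
      else if (i:ℕ)+1 = j ∨ (j:ℕ)+1 = i then -1 else 0
  | Sum.inl i, Sum.inr j => if (i:ℕ) = (j:ℕ)+1 then -1 else 0
  | Sum.inr j, Sum.inl i => if (i:ℕ) = (j:ℕ)+1 then -1 else 0
  | Sum.inr j, Sum.inr k => if (j:ℕ) = (k:ℕ) then 2 else 0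

open scoped Classical in
lemma reducedLap_combTree {p : ℕ} (hp : 2 ≤ p) (u v : Fin p ⊕ Fin (p-1)) :
    reducedLap (combTree p) u v = entZ p u v := by
  rw [reducedLap_apply]
  rcases u with i | j <;> rcases v with i' | j'
  · rw [ncard_spine hp i]
    simp only [entZ, Sum.inl.injEq, combTree_adj_ll, Fin.ext_iff]
    push_cast
    split_ifs <;> omega
  · rw [ncard_spine hp i]
    simp only [entZ, reduceCtorEq, if_false, combTree_adj_lr]
    split_ifs <;> omega
  · rw [ncard_leaf hp j]
    simp only [entZ, reduceCtorEq, if_false, combTree_adj_rl]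
    split_ifs <;> omega
  · rw [ncard_leaf hp j]
    have : ¬ (combTree p).Adj (.inr j) (.inr j') := combTree_adj_rr j j'
    simp only [entZ, Sum.inr.injEq, this, if_false, Fin.ext_iff]
    push_cast
    split_ifs <;> omega

open scoped Classical in
lemma colId_first {p : ℕ} (hp : 2 ≤ p) :
    (fun u => reducedLap (combTree p) u (Sum.inl ⟨0, by omega⟩)) =
      (2:ℤ) • Pi.single (Sum.inl (⟨0, by omega⟩ : Fin p)) (1:ℤ)
        - Pi.single (Sum.inl ⟨1, by omega⟩) 1 := by
  funext u
  rw [reducedLap_combTree hp]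
  rcases u with ⟨k, hk⟩ | ⟨k, hk⟩ <;>
    simp [entZ, Pi.single_apply, Fin.ext_iff] <;> split_ifs <;> omega

open scoped Classical in
lemma colId_mid {p : ℕ} (hp : 2 ≤ p) (i : ℕ) (h1 : 0 < i) (h2 : i < p - 1) :
    (fun u => reducedLap (combTree p) u (Sum.inl ⟨i, by omega⟩)) =
      (4:ℤ) • Pi.single (Sum.inl (⟨i, by omega⟩ : Fin p)) (1:ℤ)
        - Pi.single (Sum.inl ⟨i-1, by omega⟩) 1
        - Pi.single (Sum.inl ⟨i+1, by omega⟩) 1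
        - Pi.single (Sum.inr ⟨i-1, by omega⟩) 1 := by
  funext u
  rw [reducedLap_combTree hp]
  rcases u with ⟨k, hk⟩ | ⟨k, hk⟩ <;>
    simp [entZ, Pi.single_apply, Fin.ext_iff] <;> split_ifs <;> omega

open scoped Classical in
lemma colId_last {p : ℕ} (hp : 2 ≤ p) :
    (fun u => reducedLap (combTree p) u (Sum.inl ⟨p-1, by omega⟩)) =
      (3:ℤ) • Pi.single (Sum.inl (⟨p-1, by omega⟩ : Fin p)) (1:ℤ)
        - Pi.single (Sum.inl ⟨p-2, by omega⟩) 1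
        - Pi.single (Sum.inr ⟨p-2, by omega⟩) 1 := by
  funext u
  rw [reducedLap_combTree hp]
  rcases u with ⟨k, hk⟩ | ⟨k, hk⟩ <;>
    simp [entZ, Pi.single_apply, Fin.ext_iff] <;> split_ifs <;> omega

open scoped Classical in
lemma colId_leaf {p : ℕ} (hp : 2 ≤ p) (j : ℕ) (hj : j < p - 1) :
    (fun u => reducedLap (combTree p) u (Sum.inr ⟨j, hj⟩)) =
      (2:ℤ) • Pi.single (Sum.inr (⟨j, hj⟩ : Fin (p-1))) (1:ℤ)
        - Pi.single (Sum.inl ⟨j+1, by omega⟩) 1 := by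
  funext u
  rw [reducedLap_combTree hp]
  rcases u with ⟨k, hk⟩ | ⟨k, hk⟩ <;>
    simp [entZ, Pi.single_apply, Fin.ext_iff] <;> split_ifs <;> omega

open scoped Classical in
lemma gen_top {p : ℕ} (hp : 2 ≤ p) :
    (LinearMap.range (reducedLap (combTree p)).mulVecLin ⊔
      Submodule.span ℤ {Pi.single (Sum.inl (⟨0, by omega⟩ : Fin p)) (1:ℤ)}) = ⊤ := by
  set S := (LinearMap.range (reducedLap (combTree p)).mulVecLin ⊔
      Submodule.span ℤ {Pi.single (Sum.inl (⟨0, by omega⟩ : Fin p)) (1:ℤ)}) with hSdef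
  -- the generator and all columns are in S
  have hg : Pi.single (Sum.inl (⟨0, by omega⟩ : Fin p)) (1:ℤ) ∈ S :=
    Submodule.mem_sup_right (Submodule.subset_span rfl)
  have hcol : ∀ v, (fun u => reducedLap (combTree p) u v) ∈ S := by
    intro v
    apply Submodule.mem_sup_left
    exact ⟨Pi.single v 1, by
      rw [Matrix.mulVecLin_apply, Matrix.mulVec_single]; simp; rfl⟩
  -- nat-indexed basis vectors
  set X : ℕ → ((Fin p ⊕ Fin (p-1)) → ℤ) := fun i =>
    if h : i < p then Pi.single (Sum.inl ⟨i, h⟩) 1 else 0 with hXdef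
  set Y : ℕ → ((Fin p ⊕ Fin (p-1)) → ℤ) := fun j =>
    if h : j < p - 1 then Pi.single (Sum.inr ⟨j, h⟩) 1 else 0 with hYdef
  have hX : ∀ i (h : i < p), X i = Pi.single (Sum.inl ⟨i, h⟩) (1:ℤ) :=
    fun i h => dif_pos h
  have hY : ∀ j (h : j < p - 1), Y j = Pi.single (Sum.inr ⟨j, h⟩) (1:ℤ) :=
    fun j h => dif_pos h
  -- basic membership facts
  have f1 : X 0 ∈ S := by rw [hX 0 (by omega)]; exact hg
  have f2 : (2:ℤ) • X 0 - X 1 ∈ S := by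
    rw [hX 0 (by omega), hX 1 (by omega)]
    have h := hcol (Sum.inl ⟨0, by omega⟩)
    rw [colId_first hp] at h
    exact h
  have fmid : ∀ i, 0 < i → i < p - 1 →
      (4:ℤ) • X i - X (i-1) - X (i+1) - Y (i-1) ∈ S := by
    intro i h1 h2
    rw [hX i (by omega), hX (i-1) (by omega), hX (i+1) (by omega), hY (i-1) (by omega)]
    have h := hcol (Sum.inl ⟨i, by omega⟩)
    rw [colId_mid hp i h1 h2] at h
    exact h
  have flast : (3:ℤ) • X (p-1) - X (p-2) - Y (p-2) ∈ S := by
    rw [hX (p-1) (by omega), hX (p-2) (by omega), hY (p-2) (by omega)]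
    have h := hcol (Sum.inl ⟨p-1, by omega⟩)
    rw [colId_last hp] at h
    exact h
  have fleaf : ∀ j, j < p - 1 → (2:ℤ) • Y j - X (j+1) ∈ S := by
    intro j hj
    rw [hY j hj, hX (j+1) (by omega)]
    have h := hcol (Sum.inr ⟨j, hj⟩)
    rw [colId_leaf hp j hj] at h
    exact h
  -- X 1 ∈ S
  have d1 : X 1 ∈ S := by
    have h := S.sub_mem (S.smul_mem 2 f1) f2
    simpa using h
  -- all leaves in S
  have hallY : ∀ j, j < p - 1 → Y j ∈ S := by
    by_cases hp3 : 3 ≤ p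
    · -- main case
      have hY2 : (2:ℤ) • Y 0 ∈ S := by
        have h := S.add_mem (fleaf 0 (by omega)) d1
        simpa using h
      -- invariant
      have Inv : ∀ j, j + 1 ≤ p - 2 → ∃ a : ℤ,
          (Y j - a • Y (j+1) ∈ S) ∧ ((2:ℤ)^(j+2) • Y (j+1) ∈ S) := by
        intro j
        induction j with
        | zero =>
          intro hj
          have hm := fmid 1 (by omega) (by omega)
          rw [show (1:ℕ)-1 = 0 from rfl, show (1:ℕ)+1 = 2 from rfl] at hm
          have e1 : X 2 + Y 0 ∈ S := by
            have h := S.sub_mem (S.sub_mem (S.smul_mem 4 d1) f1) hm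
            have hid : X 2 + Y 0 =
                (4:ℤ) • X 1 - X 0 - ((4:ℤ) • X 1 - X 0 - X 2 - Y 0) := by module
            rw [hid]; exact h
          have hf1 := fleaf 1 (by omega)
          rw [show (1:ℕ)+1 = 2 from rfl] at hf1
          have e2 : Y 0 + (2:ℤ) • Y 1 ∈ S := by
            have h := S.add_mem hf1 e1
            have hid : Y 0 + (2:ℤ) • Y 1 =
                ((2:ℤ) • Y 1 - X 2) + (X 2 + Y 0) := by module
            rw [hid]; exact h
          refine ⟨2, ?_, ?_⟩
          · have h := S.sub_mem hY2 e2
            have hid : Y 0 - (2:ℤ) • Y 1 = (2:ℤ) • Y 0 - (Y 0 + (2:ℤ) • Y 1) := by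
              module
            rw [hid]; exact h
          · have h := S.sub_mem (S.smul_mem 2 e2) hY2
            rw [show (0:ℕ)+1 = 1 from rfl, show ((2:ℤ))^(0+2) = 4 by norm_num]
            have hid : (4:ℤ) • Y 1 =
                (2:ℤ) • (Y 0 + (2:ℤ) • Y 1) - (2:ℤ) • Y 0 := by module
            rw [hid]; exact h
        | succ j IH =>
          intro hj
          obtain ⟨a, hA, hB⟩ := IH (by omega)
          -- the three leaf relations and the middle column at j+2
          have hA2 := fmid (j+2) (by omega) (by omega)
          rw [show j+2-1 = j+1 by omega, show j+2+1 = j+3 by omega] at hA2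
          have hB1 := fleaf j (by omega)
          have hB2 := fleaf (j+1) (by omega)
          have hB3 := fleaf (j+2) (by omega)
          rw [show j+1+1 = j+2 by omega] at hB2
          rw [show j+2+1 = j+3 by omega] at hB3
          have hrel : (7:ℤ) • Y (j+1) - (2:ℤ) • Y j - (2:ℤ) • Y (j+2) ∈ S := by
            have h := S.sub_mem (S.sub_mem (S.add_mem hA2 (S.smul_mem 4 hB2)) hB1) hB3
            have hid : (7:ℤ) • Y (j+1) - (2:ℤ) • Y j - (2:ℤ) • Y (j+2) =
                ((4:ℤ) • X (j+2) - X (j+1) - X (j+3) - Y (j+1))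
                  + (4:ℤ) • ((2:ℤ) • Y (j+1) - X (j+2))
                  - ((2:ℤ) • Y j - X (j+1))
                  - ((2:ℤ) • Y (j+2) - X (j+3)) := by
              module
            rw [hid]; exact h
          have hw : ((7 - 2*a):ℤ) • Y (j+1) - (2:ℤ) • Y (j+2) ∈ S := by
            have h := S.add_mem hrel (S.smul_mem 2 hA)
            have hid : ((7 - 2*a):ℤ) • Y (j+1) - (2:ℤ) • Y (j+2) =
                ((7:ℤ) • Y (j+1) - (2:ℤ) • Y j - (2:ℤ) • Y (j+2))
                  + (2:ℤ) • (Y j - a • Y (j+1)) := by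
              module
            rw [hid]; exact h
          have hcop : IsCoprime ((7:ℤ) - 2*a) ((2:ℤ)^(j+2)) :=
            IsCoprime.pow_right ⟨1, a - 3, by ring⟩
          obtain ⟨α, β, h1⟩ := hcop
          refine ⟨2*α, ?_, ?_⟩
          · have h := S.add_mem (S.smul_mem α hw) (S.smul_mem β hB)
            have hid : Y (j+1) - (2*α) • Y (j+2) =
                α • (((7 - 2*a):ℤ) • Y (j+1) - (2:ℤ) • Y (j+2))
                  + β • ((2:ℤ)^(j+2) • Y (j+1)) := by
              rw [show Y (j+1) - (2*α) • Y (j+2)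
                  = (α * (7 - 2*a) + β * 2^(j+2)) • Y (j+1) - (2*α) • Y (j+2) by
                rw [h1, one_smul]]
              module
            rw [hid]; exact h
          · have h := S.sub_mem (S.smul_mem ((7:ℤ)-2*a) hB) (S.smul_mem ((2:ℤ)^(j+2)) hw)
            have hid : (2:ℤ)^(j+1+2) • Y (j+1+1) =
                ((7:ℤ)-2*a) • ((2:ℤ)^(j+2) • Y (j+1))
                  - (2:ℤ)^(j+2) • (((7 - 2*a):ℤ) • Y (j+1) - (2:ℤ) • Y (j+2)) := by
              rw [show j+1+2 = j+3 by omega, show j+1+1 = j+2 by omega]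
              rw [show (2:ℤ)^(j+3) = 2 * 2^(j+2) by ring]
              module
            rw [hid]; exact h
      -- final step : Y (p-2) ∈ S
      obtain ⟨a, hA, hB⟩ := Inv (p-3) (by omega)
      rw [show p-3+1 = p-2 by omega] at hA
      rw [show p-3+1 = p-2 by omega, show p-3+2 = p-1 by omega] at hB
      have hBlast := fleaf (p-2) (by omega)
      rw [show p-2+1 = p-1 by omega] at hBlast
      have hBprev := fleaf (p-3) (by omega)
      rw [show p-3+1 = p-2 by omega] at hBprev
      have h5 : ((5 - 2*a):ℤ) • Y (p-2) ∈ S := by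
        have h := S.add_mem (S.sub_mem (S.add_mem flast (S.smul_mem 3 hBlast)) hBprev)
          (S.smul_mem 2 hA)
        have hid : ((5 - 2*a):ℤ) • Y (p-2) =
            ((3:ℤ) • X (p-1) - X (p-2) - Y (p-2))
              + (3:ℤ) • ((2:ℤ) • Y (p-2) - X (p-1))
              - ((2:ℤ) • Y (p-3) - X (p-2))
              + (2:ℤ) • (Y (p-3) - a • Y (p-2)) := by
          module
        rw [hid]; exact h
      have hcop : IsCoprime ((5:ℤ) - 2*a) ((2:ℤ)^(p-1)) :=
        IsCoprime.pow_right ⟨1, a - 2, by ring⟩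
      obtain ⟨α, β, h1⟩ := hcop
      have hfin : Y (p-2) ∈ S := by
        have h := S.add_mem (S.smul_mem α h5) (S.smul_mem β hB)
        have hid : ((α * (5 - 2*a) + β * 2^(p-1)):ℤ) • Y (p-2) =
            α • (((5 - 2*a):ℤ) • Y (p-2)) + β • ((2:ℤ)^(p-1) • Y (p-2)) := by
          module
        rw [h1, one_smul] at hid
        rw [hid]; exact h
      -- downward propagation
      have down : ∀ m, m ≤ p - 2 - 0 → Y (p-2-m) ∈ S := by
        intro m
        induction m with
        | zero => intro _; simpa using hfin
        | succ m IH =>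
          intro hm
          obtain ⟨a, hA, _⟩ := Inv (p-2-(m+1)) (by omega)
          have hnext : Y (p-2-(m+1)+1) ∈ S := by
            rw [show p-2-(m+1)+1 = p-2-m by omega]
            exact IH (by omega)
          have h := S.add_mem hA (S.smul_mem a hnext)
          have hid : Y (p-2-(m+1)) =
              (Y (p-2-(m+1)) - a • Y (p-2-(m+1)+1)) + a • Y (p-2-(m+1)+1) := by
            module
          rw [hid]; exact h
      intro j hj
      have h := down (p-2-j) (by omega)
      rwa [show p-2-(p-2-j) = j by omega] at h
    · -- p = 2
      have hp2 : p = 2 := by omega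
      intro j hj
      have hj0 : j = 0 := by omega
      subst hj0
      rw [congrArg X (show p-1 = 1 by omega), congrArg X (show p-2 = 0 by omega),
        congrArg Y (show p-2 = 0 by omega)] at flast
      have h := S.sub_mem (S.sub_mem (S.smul_mem 3 d1) f1) flast
      have hid : Y 0 = (3:ℤ) • X 1 - X 0
          - ((3:ℤ) • X 1 - X 0 - Y 0) := by module
      rw [hid]; exact h
  -- all spine vertices in S
  have hallX : ∀ i, i < p → X i ∈ S := by
    intro i hi
    match i with
    | 0 => exact f1
    | (k+1) =>
      have hYk := hallY k (by omega)
      have h := S.sub_mem (S.smul_mem 2 hYk) (fleaf k (by omega))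
      have hid : X (k+1) = (2:ℤ) • Y k - ((2:ℤ) • Y k - X (k+1)) := by module
      rw [hid]; exact h
  -- conclude
  rw [eq_top_iff]
  intro x _
  rw [pi_eq_sum_univ x]
  refine Submodule.sum_mem S ?_
  intro v _
  refine S.smul_mem _ ?_
  have hsng : (fun j => if v = j then (1:ℤ) else 0) = Pi.single v 1 := by
    funext j
    rw [Pi.single_apply]
    simp [eq_comm]
  rw [hsng]
  rcases v with i | j
  · have h := hallX i.val i.isLt
    rwa [hX i.val i.isLt, Fin.eta] at h
  · have h := hallY j.val j.isLt
    rwa [hY j.val j.isLt, Fin.eta] at h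


/-- For every integer `p ≥ 2`, the sandpile group
`K(Cone(T_p))` of the cone over the left comb tree `T_p` (the cokernel of the
reduced Laplacian of `Cone(T_p)`) is cyclic, while the tree `T_p` has exactly
`p` leaves (vertices with exactly one neighbor). -/
theorem sandpile_cone_combTree_cyclic (p : ℕ) (hp : 2 ≤ p) :
    IsAddCyclic
      ((Fin p ⊕ Fin (p - 1) → ℤ) ⧸
        LinearMap.range (reducedLap (combTree p)).mulVecLin) ∧
    Nat.card {v : Fin p ⊕ Fin (p - 1) //
      Nat.card {w // (combTree p).Adj v w} = 1} = p := by
  constructor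
  · set g : (Fin p ⊕ Fin (p-1)) → ℤ := Pi.single (Sum.inl ⟨0, by omega⟩) 1 with hgdef
    refine ⟨⟨Submodule.Quotient.mk g, ?_⟩⟩
    intro y
    obtain ⟨x, rfl⟩ := Submodule.Quotient.mk_surjective _ y
    have hx : x ∈ (LinearMap.range (reducedLap (combTree p)).mulVecLin ⊔
        Submodule.span ℤ {g}) := by
      rw [gen_top hp]; trivial
    obtain ⟨u, hu, v, hv, huv⟩ := Submodule.mem_sup.mp hx
    obtain ⟨c, rfl⟩ := Submodule.mem_span_singleton.mp hv
    refine ⟨c, ?_⟩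
    show c • _ = _
    have hmk : (Submodule.Quotient.mk x :
        (Fin p ⊕ Fin (p - 1) → ℤ) ⧸ LinearMap.range (reducedLap (combTree p)).mulVecLin)
        = c • Submodule.Quotient.mk g := by
      rw [← huv, Submodule.Quotient.mk_add, Submodule.Quotient.mk_smul,
        (Submodule.Quotient.mk_eq_zero _).mpr hu, zero_add]
    rw [hmk]
  · exact leaf_count hp
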